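/- For the Vervaat perpetuity with parameter β > 0, i.e., W = U^{1/β} with U uniform on (0,1), the conditional distribution of W(1+x) given W ≤ 1/(1+x) equals the unconditional distribution of W, for every x ≥ 0. -/

import Mathlib

open MeasureTheory ProbabilityTheory

theorem vervaat_conditional_dist {Ω : Type*} [MeasureSpace Ω]
    [IsProbabilityMeasure (ℙ : Measure Ω)]
    (β : ℝ) (hβ : 0 < β) (x : ℝ) (hx : 0 ≤ x)
    (U : Ω → ℝ) (hU : Measurable U)
    (hUd : Measure.map U ℙ = volume.restrict (Set.Ioo 0 1)) :
    Measure.map (fun ω => U ω ^ (1/β) * (1 + x))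
        (ProbabilityTheory.cond ℙ {ω | U ω ^ (1/β) ≤ 1 / (1 + x)})
      = Measure.map (fun ω => U ω ^ (1/β)) ℙ := by
  have h1x : (0:ℝ) < 1 + x := by linarith
  set c : ℝ := 1 / (1 + x) with hc_def
  have hc : 0 < c := by positivity
  have hc1 : c ≤ 1 := by rw [hc_def, div_le_one h1x]; linarith
  set p : ℝ := c ^ β with hp_def
  have hp : 0 < p := Real.rpow_pos_of_pos hc β
  have hp1 : p ≤ 1 := Real.rpow_le_one hc.le hc1 hβ.le
  have hβne : β ≠ 0 := hβ.ne'
  -- measurable functions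
  have hg : Measurable fun t : ℝ => t ^ (1/β) := by measurability
  have hh : Measurable fun t : ℝ => t ^ (1/β) * (1 + x) := hg.mul_const _
  set T : Set ℝ := {t : ℝ | t ^ (1/β) ≤ c} with hT_def
  have hT : MeasurableSet T := hg measurableSet_Iic
  have hS : {ω | U ω ^ (1/β) ≤ c} = U ⁻¹' T := rfl
  -- on (0,1), membership in T is t ≤ p
  have hTp : ∀ t ∈ Set.Ioo (0:ℝ) 1, (t ∈ T ↔ t ≤ p) := by
    intro t ht
    have ht0 : (0:ℝ) ≤ t := ht.1.le
    constructor
    · intro h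
      have := Real.rpow_le_rpow (Real.rpow_nonneg ht0 _) h hβ.le
      rwa [one_div, Real.rpow_inv_rpow ht0 hβne] at this
    · intro h
      have h2 := Real.rpow_le_rpow ht0 h (by positivity : (0:ℝ) ≤ 1/β)
      have h3 : p ^ (1/β) = c := by
        rw [hp_def, one_div]; exact Real.rpow_rpow_inv hc.le hβne
      exact h2.trans_eq h3
  -- the set T ∩ Ioo 0 1 is a.e. equal to Ioo 0 p
  have hae : (T ∩ Set.Ioo 0 1 : Set ℝ) =ᵐ[volume] Set.Ioo 0 p := by
    rw [ae_eq_set]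
    constructor
    · refine measure_mono_null (fun t ht => ?_) (Real.volume_singleton (a := p))
      obtain ⟨⟨h1, h2⟩, h3⟩ := ht
      have htp : t ≤ p := (hTp t h2).1 h1
      simp only [Set.mem_Ioo, not_and] at h3
      exact le_antisymm htp (not_lt.1 fun hlt => (h3 h2.1 hlt).elim) ▸ rfl
    · refine measure_mono_null (fun t ht => ?_) measure_empty
      obtain ⟨⟨h1, h2⟩, h3⟩ := ht
      exact absurd ⟨(hTp t ⟨h1, h2.trans_le hp1⟩).2 h2.le, h1, h2.trans_le hp1⟩ h3
  -- probability of the conditioning event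
  have hPS : ℙ (U ⁻¹' T) = ENNReal.ofReal p := by
    rw [← Measure.map_apply hU hT, hUd, Measure.restrict_apply hT]
    calc volume (T ∩ Set.Ioo 0 1) = volume (Set.Ioo 0 p) := measure_congr hae
      _ = ENNReal.ofReal p := by rw [Real.volume_Ioo, sub_zero]
  -- pushforward of the restricted measure
  have key : Measure.map (fun t : ℝ => t ^ (1/β) * (1 + x))
      (volume.restrict (Set.Ioo 0 p))
      = ENNReal.ofReal p • Measure.map (fun t : ℝ => t ^ (1/β))
          (volume.restrict (Set.Ioo 0 1)) := by
    have hmul : Measurable (fun t : ℝ => p * t) := measurable_const_mul p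
    have hpre : (fun t : ℝ => p * t) ⁻¹' Set.Ioo 0 p = Set.Ioo 0 1 := by
      rw [Set.preimage_const_mul_Ioo₀ _ _ hp, zero_div, div_self hp.ne']
    have hres : volume.restrict (Set.Ioo 0 p)
        = ENNReal.ofReal p • Measure.map (fun t : ℝ => p * t)
            (volume.restrict (Set.Ioo 0 1)) := by
      rw [← hpre, ← Measure.restrict_map hmul measurableSet_Ioo,
        Real.map_volume_mul_left hp.ne', Measure.restrict_smul, smul_smul,
        abs_of_pos (inv_pos.2 hp), ← ENNReal.ofReal_mul hp.le,
        mul_inv_cancel₀ hp.ne', ENNReal.ofReal_one, one_smul]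
    rw [hres, Measure.map_smul, Measure.map_map hh hmul]
    congr 1
    refine Measure.map_congr ?_
    filter_upwards [ae_restrict_mem measurableSet_Ioo] with t ht
    have ht0 : (0:ℝ) ≤ t := ht.1.le
    show (p * t) ^ (1/β) * (1 + x) = t ^ (1/β)
    rw [Real.mul_rpow hp.le ht0, hp_def, one_div,
      Real.rpow_rpow_inv hc.le hβne, hc_def]
    field_simp
  -- put everything together
  have hmapU : Measure.map U (Measure.restrict ℙ (U ⁻¹' T))
      = volume.restrict (Set.Ioo 0 p) := by
    rw [← Measure.restrict_map hU hT, hUd, Measure.restrict_restrict hT]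
    exact Measure.restrict_congr_set hae
  rw [hS, ProbabilityTheory.cond, Measure.map_smul, hPS,
    show (fun ω => U ω ^ (1/β) * (1 + x)) = (fun t : ℝ => t ^ (1/β) * (1 + x)) ∘ U from rfl,
    ← Measure.map_map hh hU, hmapU, key, smul_smul,
    ENNReal.inv_mul_cancel (by simpa using hp) ENNReal.ofReal_ne_top, one_smul,
    show (fun ω => U ω ^ (1/β)) = (fun t : ℝ => t ^ (1/β)) ∘ U from rfl,
    ← Measure.map_map hg hU, hUd]
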